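/- Strong consistency of the Monte Carlo Kullback–Leibler estimator: almost surely, (1/n) · ∑_{i<n} (log p(X_i) − log q(X_i)) converges to the Kullback–Leibler divergence KL(P ‖ Q) as n → ∞. -/

import Mathlib

open MeasureTheory ProbabilityTheory Filter Topology
open scoped NNReal ENNReal

/-- The Kullback–Leibler divergence `KL(P ‖ Q) = ∫ log (dP/dQ) dP`. -/
noncomputable def klDivergence {α : Type*} [MeasurableSpace α] (P Q : Measure α) : ℝ :=
  ∫ x, Real.log ((P.rnDeriv Q x).toReal) ∂P

/-- **Strong consistency of the Monte Carlo Kullback–Leibler estimator.**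
Let `ν` be σ-finite, `p q : E → ℝ≥0` measurable densities with `P := ν.withDensity p` and
`Q := ν.withDensity q` probability measures and `P ≪ Q`.  If `(X i)` is an i.i.d. sequence
with law `P` and `x ↦ log (p x) - log (q x)` is `P`-integrable, then almost surely
`(1/n) * ∑_{i<n} (log p (X i) - log q (X i)) → KL(P ‖ Q)`. -/
theorem monte_carlo_kl_estimator_strong_consistency
    {E Ω : Type*} [MeasurableSpace E] [MeasurableSpace Ω]
    (ν : Measure E) [SigmaFinite ν]
    (p q : E → ℝ≥0) (hp : Measurable p) (hq : Measurable q)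
    [IsProbabilityMeasure (ν.withDensity fun x => (p x : ℝ≥0∞))]
    [IsProbabilityMeasure (ν.withDensity fun x => (q x : ℝ≥0∞))]
    (hac : (ν.withDensity fun x => (p x : ℝ≥0∞)) ≪ ν.withDensity fun x => (q x : ℝ≥0∞))
    (μ : Measure Ω) [IsProbabilityMeasure μ]
    (X : ℕ → Ω → E) (hXmeas : ∀ i, Measurable (X i))
    (hindep : iIndepFun X μ)
    (hlaw : ∀ i, Measure.map (X i) μ = ν.withDensity fun x => (p x : ℝ≥0∞))
    (hint : Integrable (fun x => Real.log (p x : ℝ) - Real.log (q x : ℝ))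
      (ν.withDensity fun x => (p x : ℝ≥0∞))) :
    ∀ᵐ ω ∂μ, Tendsto
      (fun n : ℕ => (1 / (n : ℝ)) * ∑ i ∈ Finset.range n,
        (Real.log (p (X i ω) : ℝ) - Real.log (q (X i ω) : ℝ)))
      atTop
      (𝓝 (klDivergence (ν.withDensity fun x => (p x : ℝ≥0∞))
        (ν.withDensity fun x => (q x : ℝ≥0∞)))) := by
  set P : Measure E := ν.withDensity fun x => (p x : ℝ≥0∞) with hP
  set Q : Measure E := ν.withDensity fun x => (q x : ℝ≥0∞) with hQ
  set f : E → ℝ := fun x => Real.log (p x : ℝ) - Real.log (q x : ℝ) with hf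
  have hfm : Measurable f :=
    (Real.measurable_log.comp hp.coe_nnreal_real).sub
      (Real.measurable_log.comp hq.coe_nnreal_real)
  have hpm : Measurable fun x => (p x : ℝ≥0∞) := hp.coe_nnreal_ennreal
  have hqm : Measurable fun x => (q x : ℝ≥0∞) := hq.coe_nnreal_ennreal
  -- Step 1: identify integrand with KL integrand a.e. P
  have hPν : P ≪ ν := withDensity_absolutelyContinuous _ _
  have h1 : P.rnDeriv Q * Q.rnDeriv ν =ᵐ[ν] P.rnDeriv ν := Measure.rnDeriv_mul_rnDeriv hac
  have h2 : P.rnDeriv ν =ᵐ[ν] fun x => (p x : ℝ≥0∞) := Measure.rnDeriv_withDensity ν hpm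
  have h3 : Q.rnDeriv ν =ᵐ[ν] fun x => (q x : ℝ≥0∞) := Measure.rnDeriv_withDensity ν hqm
  have hp0 : ∀ᵐ x ∂P, p x ≠ 0 := by
    rw [hP, ae_withDensity_iff hpm]
    filter_upwards with x hx
    simpa using hx
  have hq0 : ∀ᵐ x ∂P, q x ≠ 0 := by
    have : ∀ᵐ x ∂Q, q x ≠ 0 := by
      rw [hQ, ae_withDensity_iff hqm]
      filter_upwards with x hx
      simpa using hx
    exact hac.ae_le this
  have hfin : ∀ᵐ x ∂P, P.rnDeriv Q x ≠ ∞ := hac.ae_le (Measure.rnDeriv_ne_top _ _)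
  have key : (fun x => Real.log ((P.rnDeriv Q x).toReal)) =ᵐ[P] f := by
    filter_upwards [hPν.ae_le h1, hPν.ae_le h2, hPν.ae_le h3, hp0, hq0, hfin]
      with x h1 h2 h3 hp0 hq0 hfin
    have hq0' : (q x : ℝ≥0∞) ≠ 0 := by simpa using hq0
    have hd : P.rnDeriv Q x = (p x : ℝ≥0∞) / (q x : ℝ≥0∞) := by
      rw [ENNReal.eq_div_iff hq0' (by simp)]
      rw [mul_comm]
      calc (P.rnDeriv Q x) * (q x : ℝ≥0∞) = P.rnDeriv Q x * Q.rnDeriv ν x := by rw [h3]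
        _ = P.rnDeriv ν x := h1
        _ = (p x : ℝ≥0∞) := h2
    rw [hd, ENNReal.toReal_div]
    simp only [ENNReal.coe_toReal]
    rw [Real.log_div (by exact_mod_cast hp0) (by exact_mod_cast hq0)]
  have hKL : klDivergence P Q = ∫ x, f x ∂P := integral_congr_ae key
  -- Step 2: SLLN
  have hident : ∀ i, IdentDistrib (fun ω => f (X i ω)) (fun ω => f (X 0 ω)) μ μ := by
    intro i
    exact (IdentDistrib.comp ⟨(hXmeas i).aemeasurable, (hXmeas 0).aemeasurable,
      (hlaw i).trans (hlaw 0).symm⟩ hfm)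
  have hindep' : Pairwise (Function.onFun (IndepFun · · μ) fun i ω => f (X i ω)) := by
    intro i j hij
    exact (hindep.comp (fun _ => f) (fun _ => hfm)).indepFun hij
  have hint0 : Integrable (fun ω => f (X 0 ω)) μ := by
    have : Integrable f (Measure.map (X 0) μ) := by rw [hlaw 0]; exact hint
    exact (integrable_map_measure hfm.aestronglyMeasurable (hXmeas 0).aemeasurable).mp this
  have hmean : μ[fun ω => f (X 0 ω)] = klDivergence P Q := by
    rw [hKL, ← integral_map (hXmeas 0).aemeasurable hfm.aestronglyMeasurable, hlaw 0]
  have := strong_law_ae_real (fun i ω => f (X i ω)) hint0 hindep' hident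
  rw [hmean] at this
  filter_upwards [this] with ω hω
  convert hω using 2 with n
  rw [one_div, inv_mul_eq_div]
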